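/- Let a : ℕ → ℂ satisfy Σ_{α ≥ 0} |a(α)| < ∞ and define f : [−1, 1] → ℂ by f(t) := a(0) + 2·Σ_{α ≥ 1} a(α)·T_α(t), where T_α denotes the Chebyshev polynomial of the first kind (T_α(cos θ) = cos(αθ)). Define the sequence S(a) : ℕ → ℂ by S(a)(0) := a(0) − a(1)/2 − 2·Σ_{β ≥ 2} (−1)^β·a(β)/(β² − 1) and S(a)(α) := (a(α−1) − a(α+1))/(2α) for α ≥ 1. Then Σ_{α ≥ 0} |S(a)(α)| < ∞ and for every t ∈ [−1, 1], ∫_{−1}^t f(r) dr = S(a)(0) + 2·Σ_{α ≥ 1} S(a)(α)·T_α(t). -/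

import Mathlib

open Polynomial Chebyshev MeasureTheory

lemma Tbound (n : ℤ) {t : ℝ} (h : t ∈ Set.Icc (-1:ℝ) 1) : |(T ℝ n).eval t| ≤ 1 := by
  rw [← Real.cos_arccos h.1 h.2, T_real_cos]
  exact Real.abs_cos_le_one _

lemma Tneg1 (k : ℕ) : (T ℝ (k:ℤ)).eval (-1) = (-1:ℝ)^k := by
  have := Polynomial.Chebyshev.T_real_cos Real.pi (k : ℤ)
  simp only [Real.cos_pi] at this
  rw [this]
  push_cast
  simpa using Real.cos_nat_mul_pi_sub 0 k

lemma Tderiv (n : ℤ) (t : ℝ) :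
    HasDerivAt (fun x => (T ℝ n).eval x) ((n:ℝ) * (U ℝ (n-1)).eval t) t := by
  have := Polynomial.hasDerivAt (T ℝ n) t
  rwa [T_derivative_eq_U, eval_mul, eval_intCast] at this

lemma T_antideriv (n : ℕ) (t : ℝ) :
    HasDerivAt (fun x => (T ℝ ((n:ℤ)+3)).eval x / (2*((n:ℝ)+3))
        - (T ℝ ((n:ℤ)+1)).eval x / (2*((n:ℝ)+1)))
      ((T ℝ ((n:ℤ)+2)).eval t) t := by
  have h3 : ((n:ℝ)+3) ≠ 0 := by positivity
  have h1 : ((n:ℝ)+1) ≠ 0 := by positivity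
  have d3 := (Tderiv ((n:ℤ)+3) t).div_const (2*((n:ℝ)+3))
  have d1 := (Tderiv ((n:ℤ)+1) t).div_const (2*((n:ℝ)+1))
  have := d3.sub d1
  refine this.congr_deriv ?_
  have key : (T ℝ ((n:ℤ)+2)).eval t = ((U ℝ ((n:ℤ)+2)).eval t - (U ℝ (n:ℤ)).eval t) / 2 := by
    have h2 := Polynomial.Chebyshev.U_sub_two ℝ ((n:ℤ)+2)
    have h4 := Polynomial.Chebyshev.T_eq_U_sub_X_mul_U ℝ ((n:ℤ)+2)
    have e2 := congrArg (Polynomial.eval t) h2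
    have e4 := congrArg (Polynomial.eval t) h4
    simp only [eval_sub, eval_mul, eval_ofNat, eval_X] at e2 e4
    have : ((n:ℤ)+2-2) = (n:ℤ) := by ring
    rw [this] at e2
    have : ((n:ℤ)+2-1) = (n:ℤ)+1 := by ring
    rw [this] at e4
    rw [e4, e2]; ring
  rw [key]
  have e3 : ((n:ℤ)+3) - 1 = (n:ℤ)+2 := by ring
  have e1 : ((n:ℤ)+1) - 1 = (n:ℤ) := by ring
  rw [e3, e1]
  push_cast
  field_simp

lemma Tcont (n : ℤ) : Continuous fun x : ℝ => (T ℝ n).eval x := (T ℝ n).continuous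

lemma integral_T (n : ℕ) (t : ℝ) :
    ∫ r in (-1:ℝ)..t, (T ℝ ((n:ℤ)+2)).eval r
      = (T ℝ ((n:ℤ)+3)).eval t / (2*((n:ℝ)+3)) - (T ℝ ((n:ℤ)+1)).eval t / (2*((n:ℝ)+1))
        - (-1:ℝ)^n / (((n:ℝ)+2)^2 - 1) := by
  rw [intervalIntegral.integral_eq_sub_of_hasDerivAt (fun r _ => T_antideriv n r)
    ((Tcont _).intervalIntegrable _ _)]
  have e3 : ((n:ℤ)+3) = ((n+3 : ℕ) : ℤ) := by push_cast; ring
  have e1 : ((n:ℤ)+1) = ((n+1 : ℕ) : ℤ) := by push_cast; ring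
  rw [e3, e1, Tneg1, Tneg1]
  have h3 : ((n:ℝ)+3) ≠ 0 := by positivity
  have h1 : ((n:ℝ)+1) ≠ 0 := by positivity
  have hsq : ((n:ℝ)+2)^2 - 1 ≠ 0 := by intro hc; nlinarith [Nat.cast_nonneg (α := ℝ) n]
  rw [pow_add, pow_add]
  field_simp
  ring

lemma integral_T1 (t : ℝ) :
    ∫ r in (-1:ℝ)..t, (T ℝ 1).eval r = (T ℝ 2).eval t / 4 - 1/4 := by
  simp only [Polynomial.Chebyshev.T_one, Polynomial.Chebyshev.T_two, eval_X, eval_sub, eval_mul,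
    eval_ofNat, eval_pow, eval_one]
  rw [integral_id]
  ring



noncomputable def Tc (t : ℝ) (n : ℤ) : ℂ := (((Polynomial.Chebyshev.T ℝ n).eval t : ℝ) : ℂ)

lemma Tc_def (t : ℝ) (n : ℤ) : (((Polynomial.Chebyshev.T ℝ n).eval t : ℝ) : ℂ) = Tc t n := rfl

lemma Tc_eq (t : ℝ) (n : ℤ) : Tc t n = (Polynomial.Chebyshev.T ℂ n).eval (t : ℂ) := by
  rw [Tc]
  push_cast
  ring


lemma Tc_bound (n : ℤ) {t : ℝ} (h : t ∈ Set.Icc (-1:ℝ) 1) : ‖Tc t n‖ ≤ 1 := by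
  rw [Tc, Complex.norm_real, Real.norm_eq_abs]
  exact Tbound n h


lemma interchange (a : ℕ → ℂ) (ha : Summable fun α : ℕ => ‖a α‖) {t : ℝ}
    (ht : t ∈ Set.Icc (-1:ℝ) 1) :
    (∫ r in (-1:ℝ)..t,
        (a 0 + 2 * ∑' α : ℕ, a (α+1) * (((T ℝ ((α:ℤ)+1)).eval r : ℝ) : ℂ)))
      = (t+1) * a 0 + 2 * ∑' α : ℕ,
          a (α+1) * ((∫ r in (-1:ℝ)..t, (T ℝ ((α:ℤ)+1)).eval r : ℝ) : ℂ) := by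
  have ha1 : Summable fun α : ℕ => ‖a (α+1)‖ := (summable_nat_add_iff 1).2 ha
  set G : ℕ → ℝ → ℂ := fun α => Nat.rec (fun _ => a 0)
    (fun β _ r => 2 * (a (β+1) * (((T ℝ ((β:ℤ)+1)).eval r : ℝ) : ℂ))) α with hG
  have hG0 : ∀ r, G 0 r = a 0 := fun _ => rfl
  have hGS : ∀ β r, G (β+1) r = 2 * (a (β+1) * (((T ℝ ((β:ℤ)+1)).eval r : ℝ) : ℂ)) :=
    fun _ _ => rfl
  have hsub : Set.Ioc (-1:ℝ) t ⊆ Set.Icc (-1:ℝ) 1 :=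
    fun x hx => ⟨le_of_lt hx.1, hx.2.trans ht.2⟩
  have hbd : ∀ β : ℕ, ∀ r ∈ Set.Icc (-1:ℝ) 1,
      ‖a (β+1) * (((T ℝ ((β:ℤ)+1)).eval r : ℝ) : ℂ)‖ ≤ ‖a (β+1)‖ := by
    intro β r hr
    rw [norm_mul, Complex.norm_real, Real.norm_eq_abs]
    calc ‖a (β+1)‖ * |(T ℝ ((β:ℤ)+1)).eval r| ≤ ‖a (β+1)‖ * 1 :=
          mul_le_mul_of_nonneg_left (Tbound _ hr) (norm_nonneg _)
      _ = ‖a (β+1)‖ := mul_one _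
  have hFsum : ∀ r ∈ Set.Icc (-1:ℝ) 1,
      Summable fun β : ℕ => a (β+1) * (((T ℝ ((β:ℤ)+1)).eval r : ℝ) : ℂ) := by
    intro r hr
    exact Summable.of_norm_bounded ha1 (fun β => hbd β r hr)
  have hGsum : ∀ r ∈ Set.Icc (-1:ℝ) 1, Summable fun α => G α r := by
    intro r hr
    rw [← summable_nat_add_iff 1]
    simp only [hGS]
    exact ((hFsum r hr).mul_left 2)
  have hGcont : ∀ α, Continuous (G α) := by
    intro α
    cases α with
    | zero => exact continuous_const
    | succ β =>
      exact (continuous_const.mul (continuous_const.mul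
        (Complex.continuous_ofReal.comp (T ℝ ((β:ℤ)+1)).continuous))).congr
        fun r => (hGS β r).symm
  have hGint : ∀ α, IntegrableOn (G α) (Set.Ioc (-1:ℝ) t) := fun α =>
    (hGcont α).integrableOn_Ioc
  have hvol : (volume (Set.Ioc (-1:ℝ) t)).toReal = t + 1 := by
    rw [Real.volume_Ioc, ENNReal.toReal_ofReal (by linarith [ht.1])]
    ring
  have hGnorm : ∀ α, (∫ r in Set.Ioc (-1:ℝ) t, ‖G α r‖) ≤
      (t+1) * (Nat.rec ‖a 0‖ (fun β _ => 2 * ‖a (β+1)‖) α : ℝ) := by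
    intro α
    have hle : ∀ r ∈ Set.Ioc (-1:ℝ) t,
        ‖G α r‖ ≤ (Nat.rec ‖a 0‖ (fun β _ => 2 * ‖a (β+1)‖) α : ℝ) := by
      intro r hr
      cases α with
      | zero => simp [hG0]
      | succ β =>
        rw [hGS, norm_mul]
        have := hbd β r (hsub hr)
        calc ‖(2:ℂ)‖ * ‖a (β+1) * (((T ℝ ((β:ℤ)+1)).eval r : ℝ) : ℂ)‖
            ≤ 2 * ‖a (β+1)‖ := by
              rw [Complex.norm_ofNat]
              exact mul_le_mul_of_nonneg_left this (by norm_num)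
          _ = _ := rfl
    calc (∫ r in Set.Ioc (-1:ℝ) t, ‖G α r‖)
        ≤ ∫ _ in Set.Ioc (-1:ℝ) t, (Nat.rec ‖a 0‖ (fun β _ => 2 * ‖a (β+1)‖) α : ℝ) :=
          setIntegral_mono_on (hGint α).norm
            (integrableOn_const measure_Ioc_lt_top.ne) measurableSet_Ioc hle
      _ = (t+1) * _ := by rw [setIntegral_const, smul_eq_mul, measureReal_def, hvol]
  have hGnormSum : Summable fun α => ∫ r in Set.Ioc (-1:ℝ) t, ‖G α r‖ := by
    apply Summable.of_nonneg_of_le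
      (fun α => integral_nonneg (fun r => norm_nonneg _)) hGnorm
    apply Summable.mul_left
    rw [← summable_nat_add_iff 1]
    exact (ha1.mul_left 2)
  have key := MeasureTheory.integral_tsum_of_summable_integral_norm hGint hGnormSum
  -- rewrite LHS
  rw [intervalIntegral.integral_of_le ht.1]
  have hcongr : ∫ r in Set.Ioc (-1:ℝ) t,
      (a 0 + 2 * ∑' α : ℕ, a (α+1) * (((T ℝ ((α:ℤ)+1)).eval r : ℝ) : ℂ))
      = ∫ r in Set.Ioc (-1:ℝ) t, ∑' α, G α r := by
    apply setIntegral_congr_fun measurableSet_Ioc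
    intro r hr
    have hr' := hsub hr
    dsimp only
    rw [Summable.tsum_eq_zero_add (hGsum r hr'), hG0]
    simp only [hGS]
    rw [tsum_mul_left]
  rw [hcongr, ← key, Summable.tsum_eq_zero_add]
  · congr 1
    · rw [show (∫ r in Set.Ioc (-1:ℝ) t, G 0 r) = ∫ _ in Set.Ioc (-1:ℝ) t, a 0 from rfl,
        setIntegral_const, measureReal_def, hvol, Complex.real_smul]
      push_cast
      ring
    · simp only [hGS]
      have : ∀ β : ℕ, (∫ r in Set.Ioc (-1:ℝ) t,
          2 * (a (β+1) * (((T ℝ ((β:ℤ)+1)).eval r : ℝ) : ℂ)))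
          = 2 * (a (β+1) * ((∫ r in (-1:ℝ)..t, (T ℝ ((β:ℤ)+1)).eval r : ℝ) : ℂ)) := by
        intro β
        rw [← intervalIntegral.integral_of_le ht.1, intervalIntegral.integral_const_mul,
          intervalIntegral.integral_const_mul, intervalIntegral.integral_ofReal]
      rw [tsum_congr this, tsum_mul_left]
  · exact hGnormSum.of_norm_bounded (fun α => norm_integral_le_integral_norm _)

/-- The Chebyshev integration operator `S`: `S(a)(0) = a 0 − a 1 / 2 −
2 Σ_{β ≥ 2} (−1)^β a β / (β² − 1)` and `S(a)(α) = (a (α−1) − a (α+1))/(2α)`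
for `α ≥ 1`. -/
noncomputable def chebIntegrate (a : ℕ → ℂ) : ℕ → ℂ
  | 0 => a 0 - a 1 / 2 -
      2 * ∑' β : ℕ, (-1 : ℂ) ^ (β + 2) * a (β + 2) / ((((β : ℕ) + 2 : ℕ) : ℂ) ^ 2 - 1)
  | (α + 1) => (a α - a (α + 2)) / (2 * ((α : ℂ) + 1))

/-- the operator `S` represents integration from `−1`.
If `a` is an absolutely summable Chebyshev coefficient sequence representing
`f` on `[−1, 1]`, then `S(a)` is absolutely summable and represents
`t ↦ ∫_{−1}^t f`. Here `T_α` is the Chebyshev polynomial of the first kind. -/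
theorem chebIntegrate_represents_integral
    (a : ℕ → ℂ) (ha : Summable fun α : ℕ => ‖a α‖) :
    (Summable fun α : ℕ => ‖chebIntegrate a α‖) ∧
    ∀ t ∈ Set.Icc (-1 : ℝ) 1,
      (∫ r in (-1 : ℝ)..t,
          (a 0 + 2 * ∑' α : ℕ,
            a (α + 1) * (((Polynomial.Chebyshev.T ℝ ((α : ℤ) + 1)).eval r : ℝ) : ℂ)))
        = chebIntegrate a 0 + 2 * ∑' α : ℕ,
            chebIntegrate a (α + 1) *
              (((Polynomial.Chebyshev.T ℝ ((α : ℤ) + 1)).eval t : ℝ) : ℂ) := by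
  have hden : ∀ α : ℕ, (2*((α:ℂ)+1)) = ((2*((α:ℝ)+1) : ℝ) : ℂ) := by
    intro α; push_cast; ring
  have hdnorm : ∀ α : ℕ, (2:ℝ) ≤ ‖2*((α:ℂ)+1)‖ := by
    intro α
    rw [hden, Complex.norm_real, Real.norm_eq_abs, abs_of_nonneg (by positivity)]
    have : (0:ℝ) ≤ (α:ℝ) := Nat.cast_nonneg α
    linarith
  constructor
  · apply (summable_nat_add_iff 1).1
    apply Summable.of_nonneg_of_le (fun α => norm_nonneg _) _
      (ha.add ((summable_nat_add_iff 2).2 ha))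
    intro α
    show ‖(a α - a (α+2)) / (2*((α:ℂ)+1))‖ ≤ ‖a α‖ + ‖a (α+2)‖
    rw [norm_div]
    calc ‖a α - a (α+2)‖ / ‖2*((α:ℂ)+1)‖ ≤ ‖a α - a (α+2)‖ :=
          div_le_self (norm_nonneg _) (by linarith [hdnorm α])
      _ ≤ ‖a α‖ + ‖a (α+2)‖ := norm_sub_le _ _
  · intro t ht
    rw [interchange a ha ht]
    simp only [Tc_def]
    -- summability helpers
    have hsummul : ∀ (k : ℕ) (g : ℕ → ℂ), (∀ β, ‖g β‖ ≤ 2) →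
        Summable (fun β => a (β+k) * g β) := by
      intro k g hg
      apply Summable.of_norm_bounded
        (((summable_nat_add_iff k).2 ha).mul_right 2)
      intro β; rw [norm_mul]
      exact mul_le_mul_of_nonneg_left (hg β) (norm_nonneg _)
    have hq : ∀ α : ℕ, ‖Tc t ((α:ℤ)+1) / (2*((α:ℂ)+1))‖ ≤ 2 := by
      intro α
      rw [norm_div]
      calc ‖Tc t ((α:ℤ)+1)‖ / ‖2*((α:ℂ)+1)‖ ≤ 1 / 1 := by
            apply div_le_div₀ (by norm_num) (Tc_bound _ ht) (by norm_num)
            linarith [hdnorm α]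
        _ ≤ 2 := by norm_num
    have hq3 : ∀ β : ℕ, ‖Tc t ((β:ℤ)+3) / (2*((β:ℂ)+3))‖ ≤ 2 := by
      intro β
      rw [norm_div]
      have hd : (1:ℝ) ≤ ‖2*((β:ℂ)+3)‖ := by
        rw [show (2*((β:ℂ)+3)) = ((2*((β:ℝ)+3) : ℝ) : ℂ) by push_cast; ring,
          Complex.norm_real, Real.norm_eq_abs, abs_of_nonneg (by positivity)]
        have : (0:ℝ) ≤ (β:ℝ) := Nat.cast_nonneg β
        linarith
      calc ‖Tc t ((β:ℤ)+3)‖ / ‖2*((β:ℂ)+3)‖ ≤ 1 / 1 :=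
            div_le_div₀ (by norm_num) (Tc_bound _ ht) (by norm_num) hd
        _ ≤ 2 := by norm_num
    have hgC : ∀ β : ℕ, ‖((-1:ℂ))^β / (((β:ℂ)+2)^2 - 1)‖ ≤ 2 := by
      intro β
      rw [norm_div, norm_pow, norm_neg, norm_one, one_pow]
      have hd : (1:ℝ) ≤ ‖((β:ℂ)+2)^2 - 1‖ := by
        rw [show (((β:ℂ)+2)^2 - 1) = ((((β:ℝ)+2)^2 - 1 : ℝ) : ℂ) by push_cast; ring,
          Complex.norm_real, Real.norm_eq_abs]
        have : (0:ℝ) ≤ (β:ℝ) := Nat.cast_nonneg β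
        rw [abs_of_nonneg (by nlinarith)]
        nlinarith
      calc (1:ℝ) / ‖((β:ℂ)+2)^2 - 1‖ ≤ 1 / 1 :=
            div_le_div₀ (by norm_num) le_rfl (by norm_num) hd
        _ ≤ 2 := by norm_num
    have hA : Summable fun β : ℕ => a (β+2) * (Tc t ((β:ℤ)+3) / (2*((β:ℂ)+3))) :=
      hsummul 2 _ hq3
    have hB : Summable fun β : ℕ => a (β+2) * (Tc t ((β:ℤ)+1) / (2*((β:ℂ)+1))) :=
      hsummul 2 _ (fun β => hq β)
    have hC : Summable fun β : ℕ => a (β+2) * (((-1:ℂ))^β / (((β:ℂ)+2)^2 - 1)) :=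
      hsummul 2 _ hgC
    have hD : Summable fun α : ℕ => a α * (Tc t ((α:ℤ)+1) / (2*((α:ℂ)+1))) :=
      hsummul 0 _ hq
    -- summability of the integral series
    have hInorm : ∀ α : ℕ, ‖((∫ r in (-1:ℝ)..t, (T ℝ ((α:ℤ)+1)).eval r : ℝ) : ℂ)‖ ≤ 2 := by
      intro α
      rw [Complex.norm_real, Real.norm_eq_abs]
      have := intervalIntegral.norm_integral_le_of_norm_le_const
        (C := 1) (f := fun r => (T ℝ ((α:ℤ)+1)).eval r) (a := (-1:ℝ)) (b := t) ?_
      · rw [Real.norm_eq_abs] at this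
        have h2 : |t - (-1)| ≤ 2 := by
          rw [abs_of_nonneg (by linarith [ht.1])]
          linarith [ht.2]
        calc |∫ r in (-1:ℝ)..t, (T ℝ ((α:ℤ)+1)).eval r| ≤ 1 * |t - (-1)| := this
          _ ≤ 2 := by linarith
      · intro x hx
        rw [Set.uIoc_of_le ht.1] at hx
        rw [Real.norm_eq_abs]
        exact Tbound _ ⟨le_of_lt hx.1, hx.2.trans ht.2⟩
    have hIsum : Summable fun α : ℕ =>
        a (α+1) * ((∫ r in (-1:ℝ)..t, (T ℝ ((α:ℤ)+1)).eval r : ℝ) : ℂ) :=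
      hsummul 1 _ hInorm
    -- LHS series decomposition
    have hshift : ∀ β : ℕ,
        a (β+1+1) * ((∫ r in (-1:ℝ)..t, (T ℝ (((β+1:ℕ):ℤ)+1)).eval r : ℝ) : ℂ)
        = a (β+2) * (Tc t ((β:ℤ)+3) / (2*((β:ℂ)+3)))
          - a (β+2) * (Tc t ((β:ℤ)+1) / (2*((β:ℂ)+1)))
          - a (β+2) * (((-1:ℂ))^β / (((β:ℂ)+2)^2 - 1)) := by
      intro β
      rw [show (((β+1:ℕ):ℤ)+1) = ((β:ℤ)+2) by push_cast; ring, integral_T β t,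
        show β+1+1 = β+2 from rfl]
      simp only [Tc_eq]
      push_cast
      ring
    have eqL : (∑' α : ℕ, a (α+1) * ((∫ r in (-1:ℝ)..t, (T ℝ ((α:ℤ)+1)).eval r : ℝ) : ℂ))
        = a 1 * (Tc t 2 / 4 - 1/4)
          + ((∑' β : ℕ, a (β+2) * (Tc t ((β:ℤ)+3) / (2*((β:ℂ)+3))))
            - (∑' β : ℕ, a (β+2) * (Tc t ((β:ℤ)+1) / (2*((β:ℂ)+1))))
            - (∑' β : ℕ, a (β+2) * (((-1:ℂ))^β / (((β:ℂ)+2)^2 - 1)))) := by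
      rw [Summable.tsum_eq_zero_add hIsum]
      congr 1
      · rw [show (((0:ℕ):ℤ)+1) = (1:ℤ) by norm_num, integral_T1]
        rw [show ((((T ℝ 2).eval t / 4 - 1/4 : ℝ)) : ℂ)
            = Tc t 2 / 4 - 1/4 by rw [← Tc_def]; push_cast; ring]
      · rw [← Summable.tsum_sub hA hB, ← Summable.tsum_sub (hA.sub hB) hC]
        exact tsum_congr hshift
    -- RHS series decomposition
    have eqR : (∑' α : ℕ, chebIntegrate a (α+1) * Tc t ((α:ℤ)+1))
        = (∑' α : ℕ, a α * (Tc t ((α:ℤ)+1) / (2*((α:ℂ)+1))))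
          - (∑' β : ℕ, a (β+2) * (Tc t ((β:ℤ)+1) / (2*((β:ℂ)+1)))) := by
      rw [← Summable.tsum_sub hD hB]
      apply tsum_congr
      intro α
      show ((a α - a (α+2)) / (2*((α:ℂ)+1))) * Tc t ((α:ℤ)+1) = _
      have hne : (2*((α:ℂ)+1)) ≠ 0 := by
        rw [hden α]
        exact_mod_cast (by positivity : (2*((α:ℝ)+1)) ≠ 0)
      field_simp
    have hD1 : Summable fun α : ℕ => a (α+1) * (Tc t (((α+1:ℕ):ℤ)+1) / (2*(((α+1:ℕ):ℂ)+1))) :=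
      hsummul 1 _ (fun α => hq (α+1))
    have hDsplit : (∑' α : ℕ, a α * (Tc t ((α:ℤ)+1) / (2*((α:ℂ)+1))))
        = a 0 * (Tc t 1 / 2) + a 1 * (Tc t 2 / 4)
          + (∑' β : ℕ, a (β+2) * (Tc t ((β:ℤ)+3) / (2*((β:ℂ)+3)))) := by
      rw [Summable.tsum_eq_zero_add hD, Summable.tsum_eq_zero_add hD1]
      rw [show a 0 * (Tc t (((0:ℕ):ℤ)+1) / (2*(((0:ℕ):ℂ)+1))) = a 0 * (Tc t 1 / 2) by
        norm_num]
      rw [show a (0+1) * (Tc t (((0+1:ℕ):ℤ)+1) / (2*(((0+1:ℕ):ℂ)+1)))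
          = a 1 * (Tc t 2 / 4) by norm_num]
      rw [show (∑' β : ℕ, a (β+1+1) * (Tc t (((β+1+1:ℕ):ℤ)+1) / (2*(((β+1+1:ℕ):ℂ)+1))))
          = ∑' β : ℕ, a (β+2) * (Tc t ((β:ℤ)+3) / (2*((β:ℂ)+3))) from
        tsum_congr fun β => by push_cast; ring_nf]
      ring
    have eqS0 : chebIntegrate a 0
        = a 0 - a 1 / 2 - 2 * (∑' β : ℕ, a (β+2) * (((-1:ℂ))^β / (((β:ℂ)+2)^2 - 1))) := by
      show a 0 - a 1 / 2 -
          2 * (∑' β : ℕ, (-1 : ℂ) ^ (β + 2) * a (β + 2) / ((((β : ℕ) + 2 : ℕ) : ℂ) ^ 2 - 1)) = _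
      congr 2
      apply tsum_congr
      intro β
      push_cast
      ring
    have hT1 : Tc t 1 = (t : ℂ) := by
      rw [Tc]
      simp [Polynomial.Chebyshev.T_one]
    rw [eqL, eqR, hDsplit, eqS0, hT1]
    ring
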